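/- With μ = 1/√2 and generic cycle mean m(z) = E[J_z + D_z] where θ(z) = 1/√2 + O(1/z): m(z) = 1/√2 + 1/(12z) + O(z⁻²) as z → ∞, and this expansion does not depend on the O(1/z) term in θ(z). Concretely, if θ(z) = 1/√2 + γ/z + O(z⁻²), E[J_z] = θ(z)/2 - θ(z)²/(12z) + O(z⁻²) and E[D_z] = 1/(4θ(z)) + 1/(8z) + O(z⁻²), then E[J_z] + E[D_z] = 1/√2 + 1/(12z) + O(z⁻²), with the coefficient of 1/z independent of γ. -/

import Mathlib

open Filter Asymptotics

/-- If `θ(z) = 1/√2 + γ/z + O(z⁻²)`, then with `E[J_z] = θ/2 - θ²/(12z)` and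
`E[D_z] = 1/(4θ) + 1/(8z)` (up to `O(z⁻²)`), the cycle mean is
`1/√2 + 1/(12z) + O(z⁻²)`, independently of `γ`. -/
theorem stmt16 (γ : ℝ) (θ : ℝ → ℝ)
    (hθ : (fun z => θ z - (1 / Real.sqrt 2 + γ / z)) =O[atTop] fun z => (z ^ 2)⁻¹) :
    (fun z => (θ z / 2 - (θ z) ^ 2 / (12 * z)) + (1 / (4 * θ z) + 1 / (8 * z))
        - (1 / Real.sqrt 2 + 1 / (12 * z))) =O[atTop] fun z => (z ^ 2)⁻¹ := by
  set μ : ℝ := 1 / Real.sqrt 2 with hμdef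
  have hs2 : (0:ℝ) < Real.sqrt 2 := Real.sqrt_pos.2 (by norm_num)
  have hμ : 0 < μ := by positivity
  have hμ2 : μ ^ 2 = 1 / 2 := by
    rw [hμdef, div_pow, one_pow, Real.sq_sqrt (by norm_num : (0:ℝ) ≤ 2)]
  -- z⁻² = O(z⁻¹)
  have hinv2 : (fun z : ℝ => (z ^ 2)⁻¹) =O[atTop] fun z : ℝ => z⁻¹ := by
    rw [isBigO_iff]
    refine ⟨1, ?_⟩
    filter_upwards [eventually_ge_atTop 1] with z hz
    have hz0 : (0:ℝ) < z := by linarith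
    simp only [Real.norm_eq_abs, one_mul]
    rw [abs_of_pos (by positivity : (0:ℝ) < (z^2)⁻¹), abs_of_pos (by positivity : (0:ℝ) < z⁻¹)]
    rw [inv_le_inv₀ (by positivity) (by positivity)]
    nlinarith
  have h1 : (fun z : ℝ => θ z - μ) =O[atTop] fun z : ℝ => z⁻¹ := by
    have ha : (fun z : ℝ => θ z - (μ + γ / z)) =O[atTop] fun z : ℝ => z⁻¹ :=
      hθ.trans hinv2
    have hb : (fun z : ℝ => γ / z) =O[atTop] fun z : ℝ => z⁻¹ := by
      simpa [div_eq_mul_inv] using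
        (isBigO_refl (fun z : ℝ => z⁻¹) atTop).const_mul_left γ
    have h' : (fun z : ℝ => θ z - (μ + γ / z) + γ / z) = fun z : ℝ => θ z - μ := by
      funext z; ring
    have := ha.add hb
    rwa [h'] at this
  have h2 : Tendsto (fun z : ℝ => θ z - μ) atTop (nhds 0) :=
    h1.trans_tendsto tendsto_inv_atTop_zero
  have hev : ∀ᶠ z in atTop, |θ z - μ| < μ / 2 := by
    have := Metric.tendsto_nhds.mp h2 (μ / 2) (by positivity)
    simpa [Real.dist_eq] using this
  -- eventual equality
  have heq : ∀ᶠ z : ℝ in atTop,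
      (θ z / 2 - (θ z) ^ 2 / (12 * z)) + (1 / (4 * θ z) + 1 / (8 * z))
        - (μ + 1 / (12 * z))
      = (θ z - μ) ^ 2 / (2 * θ z) - (θ z - μ) * (θ z + μ) / (12 * z) := by
    filter_upwards [hev, eventually_gt_atTop 0] with z h hz
    have hθpos : 0 < θ z := by
      have := abs_sub_lt_iff.mp h
      linarith [this.2]
    have hθne : θ z ≠ 0 := ne_of_gt hθpos
    have hzne : z ≠ 0 := ne_of_gt hz
    field_simp
    ring_nf
    have hs : (Real.sqrt 2)⁻¹ ^ 2 = 1 / 2 := by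
      rw [inv_pow, Real.sq_sqrt (by norm_num : (0:ℝ) ≤ 2), one_div]
    linear_combination (-64*(θ z) - 384*z) * hs
  -- big-O pieces
  have hA : (fun z : ℝ => (θ z - μ) ^ 2) =O[atTop] fun z : ℝ => (z ^ 2)⁻¹ := by
    have := h1.mul h1
    simpa [pow_two, mul_inv] using this
  have hB : (fun z : ℝ => 1 / (2 * θ z)) =O[atTop] (fun _ : ℝ => (1:ℝ)) := by
    rw [isBigO_iff]
    refine ⟨1 / μ, ?_⟩
    filter_upwards [hev] with z h
    have hθpos : μ / 2 < θ z := by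
      have := abs_sub_lt_iff.mp h
      linarith [this.2]
    have hθ0 : 0 < θ z := by linarith
    simp only [Real.norm_eq_abs, norm_one, mul_one]
    rw [abs_of_pos (by positivity : (0:ℝ) < 1 / (2 * θ z))]
    rw [div_le_div_iff₀ (by positivity) hμ]
    nlinarith
  have hterm1 : (fun z : ℝ => (θ z - μ) ^ 2 / (2 * θ z)) =O[atTop]
      fun z : ℝ => (z ^ 2)⁻¹ := by
    have := hA.mul hB
    simpa [div_eq_mul_inv, mul_comm, mul_one, one_div] using this
  have hC : (fun z : ℝ => θ z + μ) =O[atTop] (fun _ : ℝ => (1:ℝ)) := by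
    rw [isBigO_iff]
    refine ⟨3 * μ, ?_⟩
    filter_upwards [hev] with z h
    have := abs_sub_lt_iff.mp h
    simp only [Real.norm_eq_abs, norm_one, mul_one]
    rw [abs_le]
    constructor <;> linarith [this.1, this.2]
  have hD : (fun z : ℝ => 1 / (12 * z)) =O[atTop] fun z : ℝ => z⁻¹ := by
    simp only [one_div, mul_inv]
    simpa using (isBigO_refl (fun z : ℝ => z⁻¹) atTop).const_mul_left (12:ℝ)⁻¹
  have hterm2 : (fun z : ℝ => (θ z - μ) * (θ z + μ) / (12 * z)) =O[atTop]
      fun z : ℝ => (z ^ 2)⁻¹ := by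
    have := (h1.mul hC).mul hD
    have h' : (fun z : ℝ => z⁻¹ * 1 * z⁻¹) = fun z : ℝ => (z ^ 2)⁻¹ := by
      funext z; simp [pow_two, mul_inv]
    rw [h'] at this
    simpa [div_eq_mul_inv, mul_assoc] using this
  have hg := hterm1.sub hterm2
  exact hg.congr' (heq.mono fun z h => h.symm) EventuallyEq.rfl
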